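/- Let r be a continuous bathtub-shaped hazard rate: decreasing on [0, t_min] and strictly increasing on [t_min, ∞), with lim_{t→∞} r(t) > 1/K where K = aΔμ/μ₁ and a = ∫_0^∞ F̄ with F̄(t) = exp(−∫_0^t r). Assume μ₁ > Δμ > 0. Then φ(t) = r(t)∫_0^t F̄ + F̄(t) satisfies φ(0) = 1, φ(t_min) ≤ 1, lim_{t→∞} φ(t) > μ₁/Δμ > 1, and there exists a unique T* > t_min with φ(T*) = μ₁/Δμ. -/

import Mathlib

open Set Filter MeasureTheory

/-- For a bathtub-shaped hazard rate `r` (decreasing on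
`[0,t_min]`, strictly increasing on `[t_min,∞)`) with
`lim_{t→∞} r(t) > 1/K`, `K = aΔμ/μ₁`, `μ₁ > Δμ > 0`: the function
`φ(t) = r(t)∫_0^t F̄ + F̄(t)` satisfies `φ(0) = 1`, `φ(t_min) ≤ 1`,
`lim_{t→∞} φ(t) > μ₁/Δμ > 1`, and there is a unique `T* > t_min` with
`φ(T*) = μ₁/Δμ`. -/
theorem optimal_time_existence_BFR
    (r F φ : ℝ → ℝ) (tmin a μ₁ Δμ K : ℝ)
    (htmin : 0 ≤ tmin)
    (hrcont : Continuous r) (hrnn : ∀ t, 0 ≤ r t)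
    (hrdec : AntitoneOn r (Set.Icc 0 tmin))
    (hrinc : StrictMonoOn r (Set.Ici tmin))
    (hF : ∀ t, F t = Real.exp (-(∫ x in (0:ℝ)..t, r x)))
    (hInt : MeasureTheory.IntegrableOn F (Set.Ici 0))
    (ha : a = ∫ t in Set.Ioi (0:ℝ), F t)
    (hμ₁ : 0 < μ₁) (hΔμ : 0 < Δμ) (hΔμ' : Δμ < μ₁)
    (hK : K = a * Δμ / μ₁)
    (hrlim : Filter.Tendsto r Filter.atTop Filter.atTop ∨
      ∃ L : ℝ, Filter.Tendsto r Filter.atTop (nhds L) ∧ 1 / K < L)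
    (hφ : ∀ t, φ t = r t * (∫ x in (0:ℝ)..t, F x) + F t) :
    φ 0 = 1 ∧ φ tmin ≤ 1 ∧
    (Filter.Tendsto φ Filter.atTop Filter.atTop ∨
      ∃ L : ℝ, Filter.Tendsto φ Filter.atTop (nhds L) ∧ μ₁ / Δμ < L) ∧
    1 < μ₁ / Δμ ∧
    ∃! T : ℝ, tmin < T ∧ φ T = μ₁ / Δμ := by
  have hc1 : 1 < μ₁ / Δμ := (one_lt_div hΔμ).mpr hΔμ'
  set c := μ₁ / Δμ with hc
  -- basics about F
  have hFcont : Continuous F := by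
    have : Continuous fun t => Real.exp (-(∫ x in (0:ℝ)..t, r x)) :=
      Real.continuous_exp.comp
        (intervalIntegral.continuous_primitive (fun s t => hrcont.intervalIntegrable s t) 0).neg
    exact (funext hF : F = _) ▸ this
  have hFpos : ∀ t, 0 < F t := fun t => (hF t) ▸ Real.exp_pos _
  have hF0 : F 0 = 1 := by rw [hF 0, intervalIntegral.integral_same, neg_zero, Real.exp_zero]
  have hFanti : Antitone F := by
    intro s t hst
    rw [hF s, hF t]
    apply Real.exp_le_exp.mpr
    apply neg_le_neg
    rw [← intervalIntegral.integral_add_adjacent_intervals (hrcont.intervalIntegrable 0 s)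
      (hrcont.intervalIntegrable s t)]
    have : 0 ≤ ∫ x in s..t, r x :=
      intervalIntegral.integral_nonneg hst (fun x _ => hrnn x)
    linarith
  -- FTC : F s - F t = ∫ s..t, r * F
  have hFderiv : ∀ t : ℝ, HasDerivAt F (-(r t * F t)) t := by
    intro t
    have h1 : HasDerivAt (fun u => ∫ x in (0:ℝ)..u, r x) (r t) t :=
      intervalIntegral.integral_hasDerivAt_right (hrcont.intervalIntegrable 0 t)
        (hrcont.stronglyMeasurableAtFilter _ _) hrcont.continuousAt
    have h2 : HasDerivAt (fun u => Real.exp (-(∫ x in (0:ℝ)..u, r x)))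
        (Real.exp (-(∫ x in (0:ℝ)..t, r x)) * (-(r t))) t :=
      (Real.hasDerivAt_exp _).comp t h1.neg
    have := h2.congr_of_eventuallyEq (Filter.Eventually.of_forall fun u => (hF u))
    rw [← hF t] at this
    exact this.congr_deriv (by ring)
  have hFTC : ∀ s t : ℝ, (∫ x in s..t, r x * F x) = F s - F t := by
    intro s t
    have : ∀ x ∈ uIcc s t, HasDerivAt (fun u => -F u) (r x * F x) x := by
      intro x _
      have := (hFderiv x).neg
      simp only [neg_neg] at this
      exact this
    rw [intervalIntegral.integral_eq_sub_of_hasDerivAt this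
      ((hrcont.mul hFcont).intervalIntegrable s t)]
    ring
  set G : ℝ → ℝ := fun t => ∫ x in (0:ℝ)..t, F x with hG
  have hGcont : Continuous G :=
    intervalIntegral.continuous_primitive (μ := volume) (fun s t => hFcont.intervalIntegrable s t) 0
  have hGnonneg : ∀ t, 0 ≤ t → 0 ≤ G t := fun t ht =>
    intervalIntegral.integral_nonneg ht (fun x _ => (hFpos x).le)
  have hGdiff : ∀ s t : ℝ, (∫ x in s..t, F x) = G t - G s := by
    intro s t
    have := intervalIntegral.integral_add_adjacent_intervals
      (hFcont.intervalIntegrable (μ := volume) 0 s) (hFcont.intervalIntegrable s t)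
    simp only [hG]
    linarith
  -- φ 0 = 1
  have hφ0 : φ 0 = 1 := by
    rw [hφ 0, intervalIntegral.integral_same, hF0]; ring
  -- φ tmin ≤ 1
  have hφtmin : φ tmin ≤ 1 := by
    rw [hφ tmin]
    have key : r tmin * G tmin ≤ ∫ x in (0:ℝ)..tmin, r x * F x := by
      have : r tmin * G tmin = ∫ x in (0:ℝ)..tmin, r tmin * F x := by
        rw [intervalIntegral.integral_const_mul]
      rw [this]
      apply intervalIntegral.integral_mono_on htmin
        ((continuous_const.mul hFcont).intervalIntegrable 0 tmin)
        ((hrcont.mul hFcont).intervalIntegrable 0 tmin)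
      intro x hx
      exact mul_le_mul_of_nonneg_right
        (hrdec hx (right_mem_Icc.mpr htmin) hx.2) (hFpos x).le
    rw [hFTC 0 tmin, hF0] at key
    have : (∫ x in (0:ℝ)..tmin, F x) = G tmin := rfl
    rw [this]
    linarith
  -- strict monotonicity of φ on [tmin, ∞)
  have hφmono : StrictMonoOn φ (Set.Ici tmin) := by
    intro s hs t ht hst
    rw [hφ s, hφ t]
    have hGs : 0 ≤ G s := hGnonneg s (le_trans htmin hs)
    have hrs : r s < r t := hrinc hs ht hst
    have hCint : IntervalIntegrable (fun x => (r t - r x) * F x) volume s t :=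
      ((continuous_const.sub hrcont).mul hFcont).intervalIntegrable s t
    have hC : (∫ x in s..t, (r t - r x) * F x) = r t * G t - r t * G s - F s + F t := by
      have e1 : (∫ x in s..t, (r t - r x) * F x)
          = (∫ x in s..t, r t * F x) - ∫ x in s..t, r x * F x := by
        rw [← intervalIntegral.integral_sub (f := fun x => r t * F x) (g := fun x => r x * F x)
          ((continuous_const.mul hFcont).intervalIntegrable s t)
          ((hrcont.mul hFcont).intervalIntegrable s t)]
        congr 1; funext x; ring
      rw [e1, intervalIntegral.integral_const_mul, hGdiff s t, hFTC s t]
      ring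
    have hpos : 0 < ∫ x in s..t, (r t - r x) * F x := by
      apply intervalIntegral.intervalIntegral_pos_of_pos_on hCint _ hst
      intro x hx
      have hxI : x ∈ Set.Ici tmin := le_trans hs hx.1.le
      have : r x < r t := hrinc hxI ht hx.2
      exact mul_pos (by linarith) (hFpos x)
    have hprod : r s * G s ≤ r t * G s := mul_le_mul_of_nonneg_right hrs.le hGs
    have : (∫ x in (0:ℝ)..s, F x) = G s := rfl
    rw [this]
    have : (∫ x in (0:ℝ)..t, F x) = G t := rfl
    rw [this]
    linarith
  -- a > 0
  have hInt' : IntegrableOn F (Set.Ioi 0) := hInt.mono_set Set.Ioi_subset_Ici_self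
  have ha0 : 0 < a := by
    have h01 : 0 < ∫ x in (0:ℝ)..1, F x :=
      intervalIntegral.intervalIntegral_pos_of_pos_on (hFcont.intervalIntegrable 0 1)
        (fun x _ => hFpos x) one_pos
    have hle : (∫ x in (0:ℝ)..1, F x) ≤ a := by
      rw [ha, intervalIntegral.integral_of_le zero_le_one]
      exact setIntegral_mono_set hInt' (Filter.Eventually.of_forall fun x => (hFpos x).le)
        (HasSubset.Subset.eventuallyLE Set.Ioc_subset_Ioi_self)
    linarith
  have hK0 : 0 < K := by rw [hK]; positivity
  -- limits
  have hGlim : Tendsto G atTop (nhds a) := by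
    rw [ha]
    exact intervalIntegral_tendsto_integral_Ioi 0 hInt' tendsto_id
  have hFlim : Tendsto F atTop (nhds 0) := by
    have hbdd : BddBelow (Set.range F) := ⟨0, by rintro y ⟨t, rfl⟩; exact (hFpos t).le⟩
    have hlim := tendsto_atTop_ciInf hFanti hbdd
    have hm0 : 0 ≤ ⨅ t, F t := le_ciInf fun t => (hFpos t).le
    rcases hm0.eq_or_lt with h | h
    · rwa [← h] at hlim
    · exfalso
      have hconst : IntegrableOn (fun _ : ℝ => ⨅ t, F t) (Set.Ioi (0:ℝ)) := by
        apply Integrable.mono' hInt' aestronglyMeasurable_const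
        filter_upwards with t
        rw [Real.norm_eq_abs, abs_of_nonneg hm0]
        exact ciInf_le hbdd t
      rw [integrableOn_const_iff] at hconst
      rcases hconst with h' | h'
      · exact h.ne' (enorm_eq_zero.mp h')
      · rw [Real.volume_Ioi] at h'; exact (lt_irrefl _ h').elim
  have hφeq : φ = fun t => r t * G t + F t := funext hφ
  have hφlim : Tendsto φ atTop atTop ∨
      ∃ L : ℝ, Tendsto φ atTop (nhds L) ∧ μ₁ / Δμ < L := by
    rcases hrlim with h | ⟨L, hL, hLK⟩
    · left
      rw [hφeq]
      exact Filter.Tendsto.atTop_add_nonneg (h.atTop_mul_pos ha0 hGlim) (fun t => (hFpos t).le)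
    · right
      refine ⟨L * a, ?_, ?_⟩
      · rw [hφeq]
        have := (hL.mul hGlim).add hFlim
        simpa using this
      · have h1 : 1 < L * K := (div_lt_iff₀ hK0).mp hLK
        rw [hK] at h1
        have h2 : μ₁ < L * (a * Δμ) := by
          have h3 := mul_lt_mul_of_pos_right h1 hμ₁
          rw [one_mul, mul_assoc, div_mul_cancel₀ _ (ne_of_gt hμ₁)] at h3
          exact h3
        rw [div_lt_iff₀ hΔμ]
        nlinarith
  -- existence of a point above c
  have hφcont : Continuous φ := by
    rw [hφeq]; exact (hrcont.mul hGcont).add hFcont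
  have hφtmin_lt : φ tmin < c := lt_of_le_of_lt hφtmin hc1
  obtain ⟨t₁, ht₁c, ht₁ge⟩ : ∃ t₁, c < φ t₁ ∧ tmin ≤ t₁ := by
    rcases hφlim with h | ⟨L, hL, hcL⟩
    · obtain ⟨t₁, h1, h2⟩ := ((h.eventually (eventually_gt_atTop c)).and
        (eventually_ge_atTop tmin)).exists
      exact ⟨t₁, h1, h2⟩
    · obtain ⟨t₁, h1, h2⟩ := ((hL.eventually (eventually_gt_nhds hcL)).and
        (eventually_ge_atTop tmin)).exists
      exact ⟨t₁, h1, h2⟩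
  obtain ⟨T, hTmem, hTeq⟩ := intermediate_value_Icc ht₁ge hφcont.continuousOn
    ⟨hφtmin_lt.le, ht₁c.le⟩
  have hTgt : tmin < T := by
    rcases lt_or_eq_of_le hTmem.1 with h | h
    · exact h
    · exfalso; rw [← h] at hTeq; exact (hφtmin_lt.ne hTeq)
  refine ⟨hφ0, hφtmin, hφlim, hc1, T, ⟨hTgt, hTeq⟩, ?_⟩
  rintro T' ⟨hT'gt, hT'eq⟩
  exact hφmono.injOn (Set.mem_Ici.mpr hT'gt.le) (Set.mem_Ici.mpr hTgt.le)
    (hT'eq.trans hTeq.symm)
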